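/- For any B-decision table T with |B| = k ≥ 2 and cl(T) ≥ 2, the number of rows satisfies N(T) ≤ (k² · dim T)^{I(T)}, where I(T) is the maximum dimension of a quasicomplete table in [T]. -/

import Mathlib

open scoped Classical

/-- A `B`-decision table: `dim` columns, rows are pairwise distinct tuples
from `B^dim` (a `Finset`), each row labeled by a decision `dec r : ℕ`. -/
structure Table (B : Type) [Fintype B] [DecidableEq B] where
  dim : ℕ
  rows : Finset (Fin dim → B)
  dec : (Fin dim → B) → ℕ

variable {B : Type} [Fintype B] [DecidableEq B]

/-- number of rows N(T) -/
def Table.N (T : Table B) : ℕ := T.rows.card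

/-- number of decision classes cl(T) -/
def Table.cl (T : Table B) : ℕ := (T.rows.image T.dec).card

/-- `T' ∈ [T]`: `T'` is obtained from `T` by removing columns (keeping an
order-preserving selection `φ` of columns), merging equal rows, and changing
decisions arbitrarily. -/
def SubTable (T T' : Table B) : Prop :=
  ∃ φ : Fin T'.dim → Fin T.dim, StrictMono φ ∧
    T'.rows = T.rows.image (fun r => r ∘ φ)

/-- closed class: C = ⋃_{T ∈ C} [T] -/
def IsClosedClass (C : Set (Table B)) : Prop :=
  ∀ T ∈ C, ∀ T', SubTable T T' → T' ∈ C

/-- nondegenerate: number of rows of tables in C is unbounded -/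
def Nondegenerate (C : Set (Table B)) : Prop :=
  ∀ m : ℕ, ∃ T ∈ C, m ≤ T.N

/-- a test: a set of columns separating any two rows with different decisions -/
def IsTest (T : Table B) (S : Finset (Fin T.dim)) : Prop :=
  ∀ r ∈ T.rows, ∀ r' ∈ T.rows, T.dec r ≠ T.dec r' → ∃ i ∈ S, r i ≠ r' i

/-- a reduct: a test no proper subset of which is a test -/
def IsReduct (T : Table B) (S : Finset (Fin T.dim)) : Prop :=
  IsTest T S ∧ ∀ S' ⊂ S, ¬ IsTest T S'

/-- R(T): minimum cardinality of a reduct for T -/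
noncomputable def R (T : Table B) : ℕ :=
  sInf {m | ∃ S : Finset (Fin T.dim), IsReduct T S ∧ S.card = m}

/-- quasicomplete: rows contain a product of two-element subsets of B -/
def Quasicomplete (T : Table B) : Prop :=
  ∃ Bs : Fin T.dim → Finset B, (∀ i, (Bs i).card = 2) ∧
    ∀ r : Fin T.dim → B, (∀ i, r i ∈ Bs i) → r ∈ T.rows

/-- I(T): maximum dimension of a quasicomplete table in [T] -/
noncomputable def Ival (T : Table B) : ℕ :=
  sSup {d | ∃ T', SubTable T T' ∧ Quasicomplete T' ∧ T'.dim = d}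

/-- N_C(n) = max { N(T) : T ∈ C, dim T ≤ n } -/
noncomputable def NC (C : Set (Table B)) (n : ℕ) : ℕ :=
  sSup {m | ∃ T ∈ C, T.dim ≤ n ∧ T.N = m}

section Aux
variable {B : Type} [Fintype B] [DecidableEq B]

/-- auxiliary shattering predicate -/
def Shat (n d : ℕ) (F : Finset (Fin n → B)) : Prop :=
  ∃ φ : Fin d → Fin n, StrictMono φ ∧ ∃ Bs : Fin d → Finset B,
    (∀ i, (Bs i).card = 2) ∧
    ∀ r : Fin d → B, (∀ i, r i ∈ Bs i) → r ∈ F.image (fun s => s ∘ φ)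

lemma card_le_one_of_not_shat_one {n : ℕ} {F : Finset (Fin n → B)}
    (h : ¬ Shat n 1 F) : F.card ≤ 1 := by
  by_contra hc
  push_neg at hc
  obtain ⟨r, hr, r', hr', hne⟩ := Finset.one_lt_card.mp hc
  obtain ⟨i, hi⟩ : ∃ i, r i ≠ r' i := by
    by_contra he; push_neg at he; exact hne (funext he)
  apply h
  refine ⟨fun _ => i, fun a b hab => absurd (Subsingleton.elim a b) hab.ne,
    fun _ => {r i, r' i}, fun _ => Finset.card_pair hi, fun x hx => ?_⟩
  have hx0 := hx 0
  simp only [Finset.mem_insert, Finset.mem_singleton] at hx0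
  rcases hx0 with h1 | h1
  · refine Finset.mem_image.mpr ⟨r, hr, funext fun j => ?_⟩
    have hj : x j = x 0 := congrArg x (Subsingleton.elim j 0)
    simp only [Function.comp_apply]
    rw [hj, h1]
  · refine Finset.mem_image.mpr ⟨r', hr', funext fun j => ?_⟩
    have hj : x j = x 0 := congrArg x (Subsingleton.elim j 0)
    simp only [Function.comp_apply]
    rw [hj, h1]

lemma shat_of_proj {n d : ℕ} {F : Finset (Fin (n+1) → B)}
    (h : Shat n d (F.image (fun r => r ∘ Fin.castSucc))) : Shat (n+1) d F := by
  obtain ⟨φ, hφ, Bs, hBs, hcov⟩ := h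
  refine ⟨Fin.castSucc ∘ φ, Fin.strictMono_castSucc.comp hφ, Bs, hBs, fun r hr => ?_⟩
  obtain ⟨g, hg, hgr⟩ := Finset.mem_image.mp (hcov r hr)
  obtain ⟨s, hs, hsg⟩ := Finset.mem_image.mp hg
  exact Finset.mem_image.mpr ⟨s, hs, by rw [← hgr, ← hsg]; rfl⟩

lemma shat_of_pair {n d : ℕ} {F : Finset (Fin (n+1) → B)} {a b : B} (hab : a ≠ b)
    (h : Shat n d (Finset.filter (fun g => Fin.snoc g a ∈ F ∧ Fin.snoc g b ∈ F)
      (F.image (fun r => r ∘ Fin.castSucc)))) : Shat (n+1) (d+1) F := by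
  obtain ⟨φ, hφ, Bs, hBs, hcov⟩ := h
  refine ⟨Fin.snoc (fun i => Fin.castSucc (φ i)) (Fin.last n), ?_,
    Fin.snoc Bs ({a, b} : Finset B), ?_, ?_⟩
  · intro i j hij
    rcases eq_or_ne j (Fin.last d) with rfl | hj
    · obtain ⟨i', rfl⟩ := Fin.exists_castSucc_eq.mpr hij.ne
      rw [Fin.snoc_castSucc, Fin.snoc_last]
      exact Fin.castSucc_lt_last _
    · obtain ⟨j', rfl⟩ := Fin.exists_castSucc_eq.mpr hj
      obtain ⟨i', rfl⟩ := Fin.exists_castSucc_eq.mpr (hij.trans (Fin.castSucc_lt_last j')).ne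
      rw [Fin.snoc_castSucc, Fin.snoc_castSucc]
      exact Fin.strictMono_castSucc (hφ (Fin.castSucc_lt_castSucc_iff.mp hij))
  · intro i
    refine Fin.lastCases ?_ (fun i => ?_) i
    · rw [Fin.snoc_last]; exact Finset.card_pair hab
    · rw [Fin.snoc_castSucc]; exact hBs i
  · intro r hr
    have hg0 : ∀ i, r (Fin.castSucc i) ∈ Bs i := fun i => by
      have := hr (Fin.castSucc i); rwa [Fin.snoc_castSucc] at this
    obtain ⟨g, hgmem, hgφ⟩ := Finset.mem_image.mp (hcov (fun i => r (Fin.castSucc i)) hg0)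
    rw [Finset.mem_filter] at hgmem
    obtain ⟨-, ha, hb⟩ := hgmem
    have hrl : r (Fin.last d) ∈ ({a, b} : Finset B) := by
      have := hr (Fin.last d); rwa [Fin.snoc_last] at this
    have hc : Fin.snoc g (r (Fin.last d)) ∈ F := by
      rcases Finset.mem_insert.mp hrl with h1 | h1
      · rw [h1]; exact ha
      · rw [Finset.mem_singleton.mp h1]; exact hb
    refine Finset.mem_image.mpr ⟨Fin.snoc g (r (Fin.last d)), hc, funext fun i => ?_⟩
    simp only [Function.comp_apply]
    refine Fin.lastCases ?_ (fun i => ?_) i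
    · rw [Fin.snoc_last, Fin.snoc_last]
    · rw [Fin.snoc_castSucc, Fin.snoc_castSucc]
      exact congrFun hgφ i

lemma key_bound (hB : 1 ≤ Fintype.card B) :
    ∀ (n d : ℕ) (F : Finset (Fin n → B)), ¬ Shat n (d+1) F →
      F.card ≤ max 1 ((Fintype.card B ^ 2 * n) ^ d) := by
  intro n
  induction n with
  | zero =>
    intro d F _
    refine le_max_of_le_left ?_
    calc F.card ≤ Fintype.card (Fin 0 → B) := Finset.card_le_univ F
    _ = 1 := by simp
  | succ n ih =>
    intro d F hF
    cases d with
    | zero => exact le_max_of_le_left (card_le_one_of_not_shat_one hF)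
    | succ e =>
      set k := Fintype.card B with hk
      rcases Nat.eq_zero_or_pos n with rfl | hn
      · refine le_max_of_le_right ?_
        calc F.card ≤ Fintype.card (Fin 1 → B) := Finset.card_le_univ F
        _ = k := by simp [hk]
        _ ≤ (k ^ 2) ^ (e+1) := le_trans (Nat.le_self_pow two_ne_zero k)
              (Nat.le_self_pow (Nat.succ_ne_zero e) _)
        _ = (k ^ 2 * 1) ^ (e+1) := by ring
      · have hk0 : 0 < k := hB
        have hpos : 0 < k ^ 2 * n := Nat.mul_pos (pow_pos hk0 2) hn
        set F' := F.image (fun r => r ∘ Fin.castSucc) with hF'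
        set fib : (Fin n → B) → Finset B :=
          fun g => Finset.univ.filter (fun c => Fin.snoc g c ∈ F) with hfib
        have hsnoc_mem : ∀ r ∈ F, Fin.snoc (r ∘ Fin.castSucc) (r (Fin.last n)) = r := by
          intro r _
          exact Fin.snoc_init_self r
        have hcard : F.card = ∑ g ∈ F', (fib g).card := by
          rw [hF', Finset.card_eq_sum_card_image (fun r => r ∘ Fin.castSucc) F]
          refine Finset.sum_congr rfl (fun g hg => ?_)
          refine Finset.card_nbij' (fun r => r (Fin.last n)) (fun c => Fin.snoc g c)
            ?_ ?_ ?_ ?_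
          · intro r hr
            rw [Finset.mem_coe, Finset.mem_filter] at hr
            obtain ⟨hrF, hrg⟩ := hr
            simp only [hfib, Finset.mem_coe, Finset.mem_filter, Finset.mem_univ, true_and]
            have : Fin.snoc g (r (Fin.last n)) = r := by
              rw [← hrg]; exact Fin.snoc_init_self r
            rw [this]; exact hrF
          · intro c hc
            simp only [hfib, Finset.mem_coe, Finset.mem_filter, Finset.mem_univ, true_and] at hc
            rw [Finset.mem_coe, Finset.mem_filter]
            refine ⟨hc, funext fun i => ?_⟩
            simp
          · intro r hr
            rw [Finset.mem_coe, Finset.mem_filter] at hr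
            rw [← hr.2]
            exact Fin.snoc_init_self r
          · intro c hc
            simp
        have hfib_ne : ∀ g ∈ F', 1 ≤ (fib g).card := by
          intro g hg
          rw [hF'] at hg
          obtain ⟨r, hrF, hrg⟩ := Finset.mem_image.mp hg
          refine Finset.card_pos.mpr ⟨r (Fin.last n), ?_⟩
          simp only [hfib, Finset.mem_filter, Finset.mem_univ, true_and]
          have : Fin.snoc g (r (Fin.last n)) = r := by
            rw [← hrg]; exact Fin.snoc_init_self r
          rw [this]; exact hrF
        have hstep : ∀ g ∈ F', (fib g).card ≤ 1 + (fib g).offDiag.card := by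
          intro g hg
          obtain ⟨m, hm⟩ := Nat.exists_eq_add_of_le (hfib_ne g hg)
          rw [Finset.offDiag_card, hm]
          have h1 : (1+m) * (1+m) - (1+m) = (1+m) * m := by
            have : (1+m)*(1+m) = (1+m)*m + (1+m) := by ring
            omega
          rw [h1]
          have h2 : m ≤ (1+m) * m := Nat.le_mul_of_pos_left m (by omega)
          omega
        have hswap : ∑ g ∈ F', (fib g).offDiag.card
            = ∑ p ∈ (Finset.univ : Finset B).offDiag,
                (F'.filter (fun g => Fin.snoc g p.1 ∈ F ∧ Fin.snoc g p.2 ∈ F)).card := by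
          have h1 : ∀ g : Fin n → B, (fib g).offDiag
              = (Finset.univ : Finset B).offDiag.filter
                (fun p => Fin.snoc g p.1 ∈ F ∧ Fin.snoc g p.2 ∈ F) := by
            intro g
            ext ⟨x, y⟩
            simp only [hfib, Finset.mem_offDiag, Finset.mem_filter, Finset.mem_univ, true_and]
            tauto
          calc ∑ g ∈ F', (fib g).offDiag.card
              = ∑ g ∈ F', ∑ p ∈ (Finset.univ : Finset B).offDiag,
                  (if Fin.snoc g p.1 ∈ F ∧ Fin.snoc g p.2 ∈ F then 1 else 0) := by
                refine Finset.sum_congr rfl fun g _ => ?_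
                rw [h1 g, Finset.card_filter]
            _ = ∑ p ∈ (Finset.univ : Finset B).offDiag, ∑ g ∈ F',
                  (if Fin.snoc g p.1 ∈ F ∧ Fin.snoc g p.2 ∈ F then 1 else 0) :=
                Finset.sum_comm
            _ = _ := by
                refine Finset.sum_congr rfl fun p _ => ?_
                rw [Finset.card_filter]
        have hF'bound : F'.card ≤ (k^2*n)^(e+1) := by
          have hns : ¬ Shat n (e+1+1) F' := fun hs => hF (shat_of_proj hs)
          have := ih (e+1) F' hns
          rwa [max_eq_right (Nat.one_le_pow _ _ hpos)] at this
        have hF2bound : ∀ p ∈ (Finset.univ : Finset B).offDiag,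
            (F'.filter (fun g => Fin.snoc g p.1 ∈ F ∧ Fin.snoc g p.2 ∈ F)).card
              ≤ (k^2*n)^e := by
          intro p hp
          rw [Finset.mem_offDiag] at hp
          have hns : ¬ Shat n (e+1)
              (F'.filter (fun g => Fin.snoc g p.1 ∈ F ∧ Fin.snoc g p.2 ∈ F)) := by
            intro hs
            rcases Nat.eq_zero_or_pos e with rfl | he
            · exact hF (shat_of_pair hp.2.2 (by rw [hF'] at hs; exact hs))
            · exact hF (shat_of_pair hp.2.2 (by rw [hF'] at hs; exact hs))
          have := ih e _ hns
          rwa [max_eq_right (Nat.one_le_pow _ _ hpos)] at this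
        have hodc : ((Finset.univ : Finset B).offDiag).card ≤ k ^ 2 := by
          rw [Finset.offDiag_card, Finset.card_univ, ← hk]
          have : k * k = k ^ 2 := by ring
          omega
        refine le_max_of_le_right ?_
        calc F.card = ∑ g ∈ F', (fib g).card := hcard
        _ ≤ ∑ g ∈ F', (1 + (fib g).offDiag.card) := Finset.sum_le_sum hstep
        _ = F'.card + ∑ g ∈ F', (fib g).offDiag.card := by
            rw [Finset.sum_add_distrib]
            simp
        _ = F'.card + ∑ p ∈ (Finset.univ : Finset B).offDiag,
              (F'.filter (fun g => Fin.snoc g p.1 ∈ F ∧ Fin.snoc g p.2 ∈ F)).card := by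
            rw [hswap]
        _ ≤ (k^2*n)^(e+1) + ∑ _p ∈ (Finset.univ : Finset B).offDiag, (k^2*n)^e :=
            add_le_add hF'bound (Finset.sum_le_sum hF2bound)
        _ = (k^2*n)^(e+1) + ((Finset.univ : Finset B).offDiag).card * (k^2*n)^e := by
            rw [Finset.sum_const, smul_eq_mul]
        _ ≤ (k^2*n)^(e+1) + k^2 * (k^2*n)^e :=
            Nat.add_le_add_left (Nat.mul_le_mul_right _ hodc) _
        _ = (k^2)^(e+1) * (n^(e+1) + n^e) := by ring
        _ ≤ (k^2)^(e+1) * (n+1)^(e+1) := by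
            refine Nat.mul_le_mul_left _ ?_
            calc n^(e+1) + n^e = (n+1) * n^e := by ring
            _ ≤ (n+1) * (n+1)^e :=
                Nat.mul_le_mul_left _ (Nat.pow_le_pow_left (Nat.le_succ n) e)
            _ = (n+1)^(e+1) := (pow_succ' (n+1) e).symm
        _ = (k^2*(n+1))^(e+1) := (mul_pow _ _ _).symm

end Aux

theorem stmt_6 (T : Table B) (k : ℕ) (hk : Fintype.card B = k) (hk2 : 2 ≤ k)
    (hcl : 2 ≤ T.cl) : T.N ≤ (k ^ 2 * T.dim) ^ Ival T := by
  subst hk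
  have hrows : 2 ≤ T.rows.card := le_trans hcl Finset.card_image_le
  have hdim : 0 < T.dim := by
    by_contra h
    push_neg at h
    obtain ⟨r, hr, r', hr', hne⟩ := Finset.one_lt_card.mp hrows
    exact hne (funext fun i => absurd i.isLt (by omega))
  have hnotshat : ¬ Shat T.dim (Ival T + 1) T.rows := by
    intro hs
    obtain ⟨φ, hφ, Bs, hBs, hcov⟩ := hs
    have hmem : (Ival T + 1) ∈ {d | ∃ T', SubTable T T' ∧ Quasicomplete T' ∧ T'.dim = d} := by
      exact ⟨⟨Ival T + 1, T.rows.image (fun r => r ∘ φ), fun _ => 0⟩,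
        ⟨φ, hφ, rfl⟩, ⟨Bs, hBs, fun r hr => hcov r hr⟩, rfl⟩
    have hbdd : BddAbove {d | ∃ T', SubTable T T' ∧ Quasicomplete T' ∧ T'.dim = d} := by
      refine ⟨T.dim, fun d hd => ?_⟩
      obtain ⟨T', ⟨ψ, hψ, -⟩, -, rfl⟩ := hd
      simpa using Fintype.card_le_of_injective ψ hψ.injective
    have hle : Ival T + 1 ≤ Ival T := le_csSup hbdd hmem
    omega
  have hkey := key_bound (by omega) T.dim (Ival T) T.rows hnotshat
  have hpos : 0 < Fintype.card B ^ 2 * T.dim :=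
    Nat.mul_pos (pow_pos (by omega) 2) hdim
  rw [max_eq_right (Nat.one_le_pow _ _ hpos)] at hkey
  exact hkey
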